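/- Let P and Q be probability measures on a common measurable space (Ω, F), and suppose there exist ξ ≥ 0 and τ ≥ 0 such that for every measurable set S ∈ F, P(S) ≤ e^ξ·Q(S) + τ and Q(S) ≤ e^ξ·P(S) + τ. Then TV(P,Q) := sup_{S ∈ F} |P(S) − Q(S)| ≤ tanh(ξ/2) + 2τ/(e^ξ + 1). -/

import Mathlib

open scoped ENNReal
open MeasureTheory

noncomputable section

/-- The cube `[-1,1]^d`. -/
def cube (d : ℕ) : Set (Fin d → ℝ) := Set.univ.pi fun _ => Set.Icc (-1 : ℝ) 1

/-- Two datasets differ in at most one entry. -/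
def Adjacent {n : ℕ} {Ω : Type*} (X X' : Fin n → Ω) : Prop :=
  ∃ i₀ : Fin n, ∀ i, i ≠ i₀ → X i = X' i

/-- Partial derivative in the `i`-th coordinate direction. -/
def pderiv' {d : ℕ} (i : Fin d) (f : (Fin d → ℝ) → ℝ) : (Fin d → ℝ) → ℝ :=
  fun x => fderiv ℝ f x (Pi.single i 1)

/-- Multi-index partial derivative `∂^α`. -/
def mderiv {d : ℕ} (α : Fin d → ℕ) (f : (Fin d → ℝ) → ℝ) : (Fin d → ℝ) → ℝ :=
  (List.finRange d).foldr (fun i g => (pderiv' i)^[α i] g) f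

/-- Order `|α| = Σ αᵢ` of a multi-index. -/
def mdeg {d : ℕ} (α : Fin d → ℕ) : ℕ := ∑ i, α i

/-- The `k`-smooth class `F_k` on `[-1,1]^d`: `C^k` functions all of whose partial
derivatives of order between `1` and `k` are bounded by `1` on the cube. -/
def memFk (d k : ℕ) (f : (Fin d → ℝ) → ℝ) : Prop :=
  ContDiff ℝ k f ∧
  ∀ α : Fin d → ℕ, 1 ≤ mdeg α → mdeg α ≤ k → ∀ x ∈ cube d, |mderiv α f x| ≤ 1

/-- The integral probability metric `d_k` associated with `F_k`. -/
def dIPM (d k : ℕ) (p q : Measure (Fin d → ℝ)) : ℝ :=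
  ⨆ f : {f : (Fin d → ℝ) → ℝ // memFk d k f}, |(∫ x, f.1 x ∂p) - ∫ x, f.1 x ∂q|

/-- Empirical measure of a dataset. -/
def empMeasure {d n : ℕ} (X : Fin n → (Fin d → ℝ)) : Measure (Fin d → ℝ) :=
  (n : ℝ≥0∞)⁻¹ • ∑ i, Measure.dirac (X i)

/-- Empirical measure of a finite tuple encoded as (length, sequence). -/
def empOut {d : ℕ} (y : ℕ × (ℕ → Fin d → ℝ)) : Measure (Fin d → ℝ) :=
  (y.1 : ℝ≥0∞)⁻¹ • ∑ i ∈ Finset.range y.1, Measure.dirac (y.2 i)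

/-- Total variation distance between two measures. -/
def tvDist {α : Type*} [MeasurableSpace α] (P Q : Measure α) : ℝ :=
  ⨆ S : {S : Set α // MeasurableSet S}, |(P S.1).toReal - (Q S.1).toReal|

/-- Normalized one-dimensional Chebyshev polynomial. -/
def TbarN (n : ℕ) (x : ℝ) : ℝ :=
  if n = 0 then 1 else Real.sqrt 2 * Real.cos (n * Real.arccos x)

/-- Normalized multivariate Chebyshev polynomial `T̄_K`. -/
def TbarK {d : ℕ} (K : Fin d → ℕ) (x : Fin d → ℝ) : ℝ := ∏ i, TbarN (K i) (x i)

/-- Normalized cosine functions `ψ_n`. -/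
def psiN (n : ℕ) (t : ℝ) : ℝ := if n = 0 then 1 else Real.sqrt 2 * Real.cos (n * t)

/-- Multivariate cosine basis `ψ_K`. -/
def psiK {d : ℕ} (K : Fin d → ℕ) (θ : Fin d → ℝ) : ℝ := ∏ i, psiN (K i) (θ i)

/-- Chebyshev weight probability measure `dμ(x) = dx/(π√(1-x²))` on `[-1,1]`. -/
def chebMeasure : Measure ℝ :=
  (volume.restrict (Set.Icc (-1 : ℝ) 1)).withDensity
    fun x => ENNReal.ofReal (1 / (Real.pi * Real.sqrt (1 - x ^ 2)))

/-- Product Chebyshev measure `μ_d` on `[-1,1]^d`. -/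
def chebMeasureD (d : ℕ) : Measure (Fin d → ℝ) := Measure.pi fun _ => chebMeasure

/-- Normalized Lebesgue measure `π⁻¹ dθ` on `[0,π]`. -/
def thetaMeasure : Measure ℝ :=
  ENNReal.ofReal (1 / Real.pi) • volume.restrict (Set.Icc (0 : ℝ) Real.pi)

/-- Product measure `π^{-d} dθ` on `[0,π]^d`. -/
def thetaMeasureD (d : ℕ) : Measure (Fin d → ℝ) := Measure.pi fun _ => thetaMeasure

/-- `‖K‖₂` for a multi-index `K`. -/
def normK {d : ℕ} (K : Fin d → ℕ) : ℝ := Real.sqrt (∑ i, ((K i : ℝ)) ^ 2)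

/-- `P` is a trigonometric polynomial of degree at most `D` in each of the `d` variables. -/
def IsTrigPoly (d D : ℕ) (P : (Fin d → ℝ) → ℝ) : Prop :=
  ∃ a : ((Fin d → ℕ) × (Fin d → Bool)) → ℝ,
    ∀ θ, P θ =
      ∑ p ∈ (Fintype.piFinset fun _ : Fin d => Finset.range (D + 1)) ×ˢ
          (Finset.univ : Finset (Fin d → Bool)),
        a p * ∏ i, (if p.2 i then Real.sin ((p.1 i : ℝ) * θ i) else Real.cos ((p.1 i : ℝ) * θ i))

/-- total variation bound from an approximate likelihood-ratio condition:
if `P(S) ≤ e^ξ Q(S) + τ` and `Q(S) ≤ e^ξ P(S) + τ` for all measurable `S`, then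
`TV(P,Q) ≤ tanh(ξ/2) + 2τ/(e^ξ + 1)`. -/
theorem tv_bound_from_approx_likelihood_ratio
    {Ω : Type*} [MeasurableSpace Ω] (P Q : Measure Ω)
    [IsProbabilityMeasure P] [IsProbabilityMeasure Q]
    (ξ τ : ℝ) (hξ : 0 ≤ ξ) (hτ : 0 ≤ τ)
    (h₁ : ∀ S : Set Ω, MeasurableSet S →
      (P S).toReal ≤ Real.exp ξ * (Q S).toReal + τ)
    (h₂ : ∀ S : Set Ω, MeasurableSet S →
      (Q S).toReal ≤ Real.exp ξ * (P S).toReal + τ) :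
    tvDist P Q ≤ Real.tanh (ξ / 2) + 2 * τ / (Real.exp ξ + 1) := by
  have ha1 : (1 : ℝ) ≤ Real.exp ξ := by
    simpa using Real.exp_le_exp.mpr hξ
  set a : ℝ := Real.exp ξ with ha
  have hapos : 0 < a + 1 := by linarith
  have htanh : Real.tanh (ξ / 2) = (a - 1) / (a + 1) := by
    rw [Real.tanh_eq_sinh_div_cosh, Real.sinh_eq, Real.cosh_eq]
    have hmul : Real.exp (ξ / 2) * Real.exp (-ξ / 2) = 1 := by
      rw [← Real.exp_add]; ring_nf; exact Real.exp_zero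
    have hmul2 : Real.exp (ξ / 2) * Real.exp (ξ / 2) = a := by
      rw [← Real.exp_add, ha]; ring_nf
    have hden : Real.exp (ξ / 2) + Real.exp (-(ξ / 2)) ≠ 0 := by
      positivity
    field_simp
    linear_combination (norm := ring_nf) (-2 * Real.exp (ξ / 2)) * hmul + (2 * Real.exp (-ξ / 2)) * hmul2
  have hrhs : Real.tanh (ξ / 2) + 2 * τ / (a + 1) = (a - 1 + 2 * τ) / (a + 1) := by
    rw [htanh]; field_simp
  rw [hrhs]
  apply ciSup_le
  rintro ⟨S, hS⟩
  have hPc : (P Sᶜ).toReal = 1 - (P S).toReal := by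
    have h := measure_add_measure_compl (μ := P) hS
    rw [measure_univ] at h
    have := congrArg ENNReal.toReal h
    rw [ENNReal.toReal_add (measure_ne_top _ _) (measure_ne_top _ _)] at this
    simp at this; linarith
  have hQc : (Q Sᶜ).toReal = 1 - (Q S).toReal := by
    have h := measure_add_measure_compl (μ := Q) hS
    rw [measure_univ] at h
    have := congrArg ENNReal.toReal h
    rw [ENNReal.toReal_add (measure_ne_top _ _) (measure_ne_top _ _)] at this
    simp at this; linarith
  set p := (P S).toReal with hp
  set q := (Q S).toReal with hq
  have hp01 : 0 ≤ p ∧ p ≤ 1 := ⟨ENNReal.toReal_nonneg, by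
    rw [hp]; exact ENNReal.toReal_le_of_le_ofReal one_pos.le (by simpa using prob_le_one)⟩
  have hq01 : 0 ≤ q ∧ q ≤ 1 := ⟨ENNReal.toReal_nonneg, by
    rw [hq]; exact ENNReal.toReal_le_of_le_ofReal one_pos.le (by simpa using prob_le_one)⟩
  have h1S : p ≤ a * q + τ := h₁ S hS
  have h2S : q ≤ a * p + τ := h₂ S hS
  have h1c : 1 - p ≤ a * (1 - q) + τ := by
    have := h₁ Sᶜ hS.compl; rw [hPc, hQc] at this; linarith
  have h2c : 1 - q ≤ a * (1 - p) + τ := by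
    have := h₂ Sᶜ hS.compl; rw [hPc, hQc] at this; linarith
  rw [abs_sub_le_iff, le_div_iff₀ hapos, le_div_iff₀ hapos]
  constructor <;> nlinarith [hp01.1, hp01.2, hq01.1, hq01.2]

end
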